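/- The limit as n → ∞ of n·P(n, m(n)) equals π, where m(n) is any sequence of integers with n/4 ≤ m(n) ≤ n/4 + 1 and P(n,m) = sin(π/n) / (2·cos((m-1)π/n)·sin(mπ/n)). -/

import Mathlib

open Real Filter Topology

lemma sin_div_self_tendsto : Tendsto (fun x : ℝ => Real.sin x / x) (𝓝[≠] 0) (𝓝 1) := by
  have h := (Real.hasDerivAt_sin 0)
  rw [hasDerivAt_iff_tendsto_slope] at h
  simp only [Real.cos_zero] at h
  refine h.congr' ?_
  filter_upwards [self_mem_nhdsWithin] with x hx
  simp [slope_def_field, div_eq_div_iff, Real.sin_zero]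

lemma pi_div_tendsto : Tendsto (fun n : ℕ => π / n) atTop (𝓝[≠] 0) := by
  rw [tendsto_nhdsWithin_iff]
  constructor
  · have : Tendsto (fun n : ℕ => π / n) atTop (𝓝 0) :=
      tendsto_const_nhds.div_atTop tendsto_natCast_atTop_atTop
    exact this
  · filter_upwards [eventually_gt_atTop 0] with n hn
    have : (0:ℝ) < π / n := div_pos Real.pi_pos (by exact_mod_cast hn)
    exact fun h => by rw [Set.mem_singleton_iff] at h; linarith

lemma n_sin_tendsto : Tendsto (fun n : ℕ => (n : ℝ) * Real.sin (π / n)) atTop (𝓝 π) := by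
  have h := (sin_div_self_tendsto.comp pi_div_tendsto).mul_const π
  rw [one_mul] at h
  refine h.congr' ?_
  filter_upwards [eventually_gt_atTop 0] with n hn
  have hn' : (n : ℝ) ≠ 0 := by exact_mod_cast hn.ne'
  field_simp [Function.comp]
  simp only [Function.comp_apply]
  field_simp

lemma squeeze_pi_quarter (f : ℕ → ℝ)
    (hlo : ∀ᶠ n : ℕ in atTop, π / 4 - π / n ≤ f n)
    (hhi : ∀ᶠ n : ℕ in atTop, f n ≤ π / 4 + π / n) :
    Tendsto f atTop (𝓝 (π / 4)) := by
  have h0 : Tendsto (fun n : ℕ => π / n) atTop (𝓝 0) :=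
    tendsto_const_nhds.div_atTop tendsto_natCast_atTop_atTop
  have hlo' : Tendsto (fun n : ℕ => π / 4 - π / n) atTop (𝓝 (π / 4)) := by
    simpa using tendsto_const_nhds.sub h0
  have hhi' : Tendsto (fun n : ℕ => π / 4 + π / n) atTop (𝓝 (π / 4)) := by
    simpa using tendsto_const_nhds.add h0
  exact tendsto_of_tendsto_of_tendsto_of_le_of_le' hlo' hhi' hlo hhi

/-- Contraction ratio of the Sierpinski n-gon built from a {n/m} star-polygon. -/
noncomputable def P (n m : ℕ) : ℝ :=
  Real.sin (π / n) / (2 * Real.cos (((m : ℝ) - 1) * π / n) * Real.sin ((m : ℝ) * π / n))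

theorem nP_tendsto_pi (m : ℕ → ℕ)
    (hm : ∀ n : ℕ, (n : ℝ) / 4 ≤ (m n : ℝ) ∧ (m n : ℝ) ≤ (n : ℝ) / 4 + 1) :
    Filter.Tendsto (fun n : ℕ => (n : ℝ) * P n (m n)) Filter.atTop (nhds π) := by
  have hub : ∀ᶠ n : ℕ in atTop, (m n : ℝ) * π / n ≤ π / 4 + π / n := by
    filter_upwards [eventually_gt_atTop 0] with n hn
    have hn' : (0:ℝ) < n := by exact_mod_cast hn
    have hc : π / n * n = π := div_mul_cancel₀ _ hn'.ne'
    have h2 := (hm n).2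
    rw [div_le_iff₀ hn']
    nlinarith [Real.pi_pos]
  have hlb : ∀ᶠ n : ℕ in atTop, π / 4 ≤ (m n : ℝ) * π / n := by
    filter_upwards [eventually_gt_atTop 0] with n hn
    have hn' : (0:ℝ) < n := by exact_mod_cast hn
    have h1 := (hm n).1
    rw [le_div_iff₀ hn']
    nlinarith [Real.pi_pos]
  have hA : Tendsto (fun n : ℕ => (m n : ℝ) * π / n) atTop (𝓝 (π / 4)) := by
    apply squeeze_pi_quarter
    · filter_upwards [hlb, eventually_gt_atTop 0] with n h1 hn
      have hn' : (0:ℝ) < n := by exact_mod_cast hn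
      have : (0:ℝ) < π / n := by positivity
      linarith
    · exact hub
  have hB : Tendsto (fun n : ℕ => ((m n : ℝ) - 1) * π / n) atTop (𝓝 (π / 4)) := by
    apply squeeze_pi_quarter
    · filter_upwards [hlb, eventually_gt_atTop 0] with n h1 hn
      have hn' : (0:ℝ) < n := by exact_mod_cast hn
      have hc : ((m n : ℝ) - 1) * π / n = (m n : ℝ) * π / n - π / n := by
        field_simp
      rw [hc]; linarith
    · filter_upwards [hub, eventually_gt_atTop 0] with n h2 hn
      have hn' : (0:ℝ) < n := by exact_mod_cast hn
      have hc : ((m n : ℝ) - 1) * π / n = (m n : ℝ) * π / n - π / n := by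
        field_simp
      have : (0:ℝ) < π / n := by positivity
      rw [hc]; linarith
  have hcos : Tendsto (fun n : ℕ => Real.cos (((m n : ℝ) - 1) * π / n)) atTop (𝓝 (Real.cos (π / 4))) :=
    (Real.continuous_cos.tendsto _).comp hB
  have hsin : Tendsto (fun n : ℕ => Real.sin ((m n : ℝ) * π / n)) atTop (𝓝 (Real.sin (π / 4))) :=
    (Real.continuous_sin.tendsto _).comp hA
  have hden : Tendsto (fun n : ℕ =>
      2 * Real.cos (((m n : ℝ) - 1) * π / n) * Real.sin ((m n : ℝ) * π / n)) atTop (𝓝 1) := by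
    have := (((tendsto_const_nhds : Filter.Tendsto (fun _ : ℕ => (2:ℝ)) atTop (𝓝 2)).mul hcos).mul hsin)
    have h1 : (2:ℝ) * Real.cos (π / 4) * Real.sin (π / 4) = 1 := by
      rw [Real.cos_pi_div_four, Real.sin_pi_div_four]
      norm_num
      nlinarith [Real.sq_sqrt (by norm_num : (2:ℝ) ≥ 0)]
    rwa [h1] at this
  have := n_sin_tendsto.div hden one_ne_zero
  rw [div_one] at this
  refine this.congr fun n => ?_
  unfold P
  simp only [Pi.div_apply]
  ring
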